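/- For any real s > 10 and any p ∈ (0,1], if w, x, y are independent uniform samples from ⟨s⟩, then Pr[w + x ∈ ⟨s·p⟩ and w + y ∈ ⟨s·p⟩] ≤ p² · (1 + 3/(s·p))². -/

import Mathlib

/-- `⟨s⟩`: the set of integers `{-⌊s/2⌋, …, ⌊s/2⌋}`. -/
noncomputable def intRange (s : ℝ) : Finset ℤ := Finset.Icc (-⌊s / 2⌋) ⌊s / 2⌋

lemma intRange_card (s : ℝ) (h : 0 < s) :
    ((intRange s).card : ℝ) = 2 * (⌊s / 2⌋ : ℝ) + 1 := by
  have hm : (0:ℤ) ≤ ⌊s / 2⌋ := Int.floor_nonneg.2 (by linarith)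
  rw [intRange, Int.card_Icc]
  have : (⌊s / 2⌋ + 1 - -⌊s / 2⌋) = 2 * ⌊s / 2⌋ + 1 := by ring
  rw [this]
  have h2 : ((2 * ⌊s / 2⌋ + 1).toNat : ℤ) = 2 * ⌊s / 2⌋ + 1 := Int.toNat_of_nonneg (by omega)
  exact_mod_cast congrArg (fun z : ℤ => (z : ℝ)) h2

theorem prob_two_correlated_sums_in_range (s : ℝ) (hs : 10 < s)
    (p : ℝ) (hp0 : 0 < p) (hp1 : p ≤ 1) :
    (((intRange s ×ˢ intRange s ×ˢ intRange s).filter fun q =>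
          q.1 + q.2.1 ∈ intRange (s * p) ∧ q.1 + q.2.2 ∈ intRange (s * p)).card : ℝ) /
        ((intRange s).card : ℝ) ^ 3
      ≤ p ^ 2 * (1 + 3 / (s * p)) ^ 2 := by
  have hsp : 0 < s * p := by positivity
  set A := intRange s with hA
  set B := intRange (s * p) with hB
  set F := (A ×ˢ A ×ˢ A).filter fun q =>
      q.1 + q.2.1 ∈ B ∧ q.1 + q.2.2 ∈ B with hF
  -- injection into A ×ˢ B ×ˢ B
  have hcard : F.card ≤ A.card * (B.card * B.card) := by
    have := Finset.card_le_card_of_injOn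
      (f := fun q : ℤ × ℤ × ℤ => (q.1, q.1 + q.2.1, q.1 + q.2.2))
      (s := F) (t := A ×ˢ B ×ˢ B)
      (by
        intro q hq
        simp only [hF, Finset.mem_coe, Finset.mem_filter, Finset.mem_product] at hq ⊢
        exact ⟨hq.1.1, hq.2.1, hq.2.2⟩)
      (by
        intro q hq r hr h
        simp only [Prod.mk.injEq] at h
        obtain ⟨h1, h2, h3⟩ := h
        have : q.2.1 = r.2.1 := by omega
        have : q.2.2 = r.2.2 := by omega
        exact Prod.ext h1 (Prod.ext ‹q.2.1 = r.2.1› ‹q.2.2 = r.2.2›))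
    simpa [Finset.card_product, mul_assoc] using this
  have ha : ((A.card : ℝ)) = 2 * (⌊s / 2⌋ : ℝ) + 1 := intRange_card s (by linarith)
  have hb : ((B.card : ℝ)) = 2 * (⌊s * p / 2⌋ : ℝ) + 1 := intRange_card (s * p) hsp
  have haf1 : (⌊s / 2⌋ : ℝ) ≤ s / 2 := Int.floor_le _
  have haf2 : s / 2 - 1 < (⌊s / 2⌋ : ℝ) := Int.sub_one_lt_floor _
  have hbf1 : (⌊s * p / 2⌋ : ℝ) ≤ s * p / 2 := Int.floor_le _
  have ha_pos : (0:ℝ) < (A.card : ℝ) := by rw [ha]; linarith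
  have hb_nonneg : (0:ℝ) ≤ (B.card : ℝ) := Nat.cast_nonneg _
  set c : ℝ := p * (1 + 3 / (s * p)) with hc
  have hc_pos : 0 < c := by positivity
  -- key: B.card ≤ c * A.card
  have hkey : (B.card : ℝ) ≤ c * (A.card : ℝ) := by
    rw [ha, hb, hc]
    have h3 : 3 / (s * p) > 0 := by positivity
    have hexp : p * (1 + 3 / (s * p)) * (s - 1) = s * p - p + 3 - 3 / s := by
      field_simp
      ring
    have h1 : 2 * (⌊s * p / 2⌋ : ℝ) + 1 ≤ s * p + 1 := by linarith
    have h2 : s - 1 ≤ 2 * (⌊s / 2⌋ : ℝ) + 1 := by linarith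
    have h4 : s * p + 1 ≤ p * (1 + 3 / (s * p)) * (s - 1) := by
      rw [hexp]
      have : 3 / s < 1 := by
        rw [div_lt_one (by linarith)]; linarith
      linarith
    calc 2 * (⌊s * p / 2⌋ : ℝ) + 1 ≤ s * p + 1 := h1
      _ ≤ p * (1 + 3 / (s * p)) * (s - 1) := h4
      _ ≤ p * (1 + 3 / (s * p)) * (2 * (⌊s / 2⌋ : ℝ) + 1) := by
          apply mul_le_mul_of_nonneg_left h2 (by positivity)
  rw [div_le_iff₀ (by positivity)]
  have hFr : (F.card : ℝ) ≤ (A.card : ℝ) * ((B.card : ℝ) * (B.card : ℝ)) := by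
    exact_mod_cast hcard
  have hc2 : p ^ 2 * (1 + 3 / (s * p)) ^ 2 = c ^ 2 := by rw [hc]; ring
  rw [hc2]
  nlinarith [mul_le_mul hkey hkey hb_nonneg (le_of_lt (by positivity : (0:ℝ) < c * A.card)),
    sq_nonneg ((A.card : ℝ)), ha_pos]
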